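/- The union of two disjoint closed Arakeljan sets E and F in ℂ is again an Arakeljan set in ℂ. -/

import Mathlib

open Set Metric

/-- A Jordan curve: the image of a continuous injective map from the unit circle into ℂ. -/
def IsJordanCurve (J : Set ℂ) : Prop :=
  ∃ f : ℂ → ℂ, ContinuousOn f (sphere (0 : ℂ) 1) ∧ Set.InjOn f (sphere (0 : ℂ) 1) ∧
    J = f '' (sphere (0 : ℂ) 1)

/-- The topological boundary of `K` is a finite union of pairwise disjoint Jordan curves. -/
def JordanBoundary (K : Set ℂ) : Prop :=
  ∃ (n : ℕ) (J : Fin n → Set ℂ), (∀ i, IsJordanCurve (J i)) ∧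
    (Pairwise fun i j => Disjoint (J i) (J j)) ∧ frontier K = ⋃ i, J i

/-- A closed set `F ⊆ ℂ` is an Arakeljan set in `ℂ`: every connected component of `ℂ \ F`
is unbounded, and for every connected compact `K` whose boundary is a finite union of
pairwise disjoint Jordan curves, the union of all bounded connected components of
`ℂ \ (F ∪ K)` is bounded. -/
def IsArakeljanC (F : Set ℂ) : Prop :=
  (∀ z ∈ Fᶜ, ¬ Bornology.IsBounded (connectedComponentIn Fᶜ z)) ∧
  ∀ K : Set ℂ, IsCompact K → IsConnected K → JordanBoundary K →
    Bornology.IsBounded (⋃ g ∈ {g : Set ℂ |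
      (∃ z ∈ (F ∪ K)ᶜ, g = connectedComponentIn (F ∪ K)ᶜ z) ∧ Bornology.IsBounded g}, g)

open scoped Classical

lemma re_pos_of_near_one {u : ℂ} (h : ‖u - 1‖ < 1) : u ∈ Complex.slitPlane := by
  rw [Complex.mem_slitPlane_iff]
  left
  have h1 : |(u - 1).re| ≤ ‖u - 1‖ := Complex.abs_re_le_norm _
  have : (u - 1).re = u.re - 1 := by simp
  nlinarith [abs_le.mp h1]

lemma logOn_perturb {A : Set ℂ} {g L : ℂ → ℂ}
    (hg : ContinuousOn g A) (hL : ContinuousOn L A)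
    (hclose : ∀ w ∈ A, ‖g w - Complex.exp (L w)‖ < ‖Complex.exp (L w)‖) :
    ∃ L', ContinuousOn L' A ∧ ∀ w ∈ A, Complex.exp (L' w) = g w := by
  have hne : ∀ w ∈ A, Complex.exp (L w) ≠ 0 := fun w _ => Complex.exp_ne_zero _
  have hu : ∀ w ∈ A, ‖g w / Complex.exp (L w) - 1‖ < 1 := by
    intro w hw
    rw [div_sub_one (hne w hw), norm_div]
    exact (div_lt_one (norm_pos_iff.mpr (hne w hw))).mpr (hclose w hw)
  have hslit : ∀ w ∈ A, g w / Complex.exp (L w) ∈ Complex.slitPlane :=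
    fun w hw => re_pos_of_near_one (hu w hw)
  refine ⟨fun w => L w + Complex.log (g w / Complex.exp (L w)), ?_, ?_⟩
  · exact hL.add ((hg.div hL.cexp hne).clog hslit)
  · intro w hw
    have hu0 : g w / Complex.exp (L w) ≠ 0 := Complex.slitPlane_ne_zero (hslit w hw)
    rw [Complex.exp_add, Complex.exp_log hu0, mul_div_cancel₀ _ (hne w hw)]
open Set Metric Bornology Complex Real

lemma eq_of_exp_eq_one {X : Type*} [TopologicalSpace X] {S : Set X}
    (hS : IsPreconnected S) {d : X → ℂ}
    (hd : ContinuousOn d S) (h1 : ∀ w ∈ S, Complex.exp (d w) = 1)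
    {p q : X} (hp : p ∈ S) (hq : q ∈ S) : d p = d q := by
  by_contra hne
  have hT : IsPreconnected (d '' S) := hS.image d hd
  have hlat : ∀ x ∈ d '' S, ∃ n : ℤ, x = n * (2 * ↑Real.pi * Complex.I) := by
    rintro x ⟨w, hw, rfl⟩
    exact Complex.exp_eq_one_iff.mp (h1 w hw)
  have hdist : ∀ x ∈ d '' S, x = d p ∨ 1 < dist x (d p) := by
    intro x hx
    obtain ⟨n, hn⟩ := hlat x hx
    obtain ⟨m, hm⟩ := hlat (d p) ⟨p, hp, rfl⟩
    rcases eq_or_ne n m with h | h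
    · left; rw [hn, hm, h]
    · right
      rw [dist_eq_norm, hn, hm, ← sub_mul]
      have : ((n : ℂ) - m) = ((n - m : ℤ) : ℂ) := by push_cast; ring
      rw [this, norm_mul]
      have h1 : (1:ℝ) ≤ ‖((n - m : ℤ) : ℂ)‖ := by
        rw [Complex.norm_intCast]
        exact_mod_cast Int.one_le_abs (sub_ne_zero.mpr h)
      have h2 : (2:ℝ) * Real.pi ≤ ‖(2 * ↑Real.pi * Complex.I : ℂ)‖ := by
        simp [norm_mul, Complex.norm_I, Complex.norm_real, abs_of_pos Real.pi_pos]
      nlinarith [Real.pi_gt_three]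
  have := hT (Metric.ball (d p) 1) (Metric.closedBall (d p) 1)ᶜ Metric.isOpen_ball
    (Metric.isClosed_closedBall.isOpen_compl)
    (by intro x hx
        rcases hdist x hx with h | h
        · left; simp [h]
        · right; simpa [Metric.mem_closedBall] using (by linarith : ¬ dist x (d p) ≤ 1))
    ⟨d p, ⟨p, hp, rfl⟩, by simp⟩
    ⟨d q, ⟨q, hq, rfl⟩, by
      rcases hdist (d q) ⟨q, hq, rfl⟩ with h | h
      · exact absurd h.symm hne
      · simpa [Metric.mem_closedBall] using (by linarith : ¬ dist (d q) (d p) ≤ 1)⟩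
  obtain ⟨x, _, hx1, hx2⟩ := this
  exact hx2 (Metric.ball_subset_closedBall hx1)

lemma no_log_on_sphere {R : ℝ} {z : ℂ} (hz : ‖z‖ < R)
    (L : ℂ → ℂ) (hL : ContinuousOn L (sphere (0:ℂ) R))
    (hexp : ∀ w ∈ sphere (0:ℂ) R, Complex.exp (L w) = w - z) : False := by
  have hR : 0 < R := lt_of_le_of_lt (norm_nonneg z) hz
  have hRC : (R : ℂ) ≠ 0 := by exact_mod_cast hR.ne'
  set c : ℝ → ℂ := fun θ => (R:ℂ) * Complex.exp (2 * Real.pi * θ * Complex.I) with hc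
  have hcnorm : ∀ θ, ‖c θ‖ = R := by
    intro θ
    have h0 : ((2:ℂ) * Real.pi * θ * Complex.I).re = 0 := by simp
    simp [hc, map_mul, Complex.norm_exp, h0, Complex.norm_real, abs_of_pos hR]
  have hcmem : ∀ θ, c θ ∈ sphere (0:ℂ) R := by
    intro θ; simpa [mem_sphere_iff_norm] using hcnorm θ
  have hcne : ∀ θ, c θ - z ≠ 0 := by
    intro θ h
    rw [sub_eq_zero] at h
    rw [← h, hcnorm θ] at hz; exact lt_irrefl _ hz
  set u : ℝ → ℂ := fun θ => 1 - (z / R) * Complex.exp (-(2 * Real.pi * θ * Complex.I)) with huu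
  have hee : ∀ θ : ℝ, Complex.exp (2 * Real.pi * θ * Complex.I) *
      Complex.exp (-(2 * Real.pi * θ * Complex.I)) = 1 := by
    intro θ; rw [← Complex.exp_add]; simp
  have hunear : ∀ θ, ‖u θ - 1‖ < 1 := by
    intro θ
    have h0 : ((-(2 * Real.pi * θ * Complex.I)).re) = 0 := by simp
    calc ‖u θ - 1‖ = ‖z/R‖ * ‖Complex.exp (-(2 * Real.pi * θ * Complex.I))‖ := by
          simp [huu, norm_mul]
      _ = ‖z‖/R := by
          rw [Complex.norm_exp, h0]
          simp [norm_div, Complex.norm_real, abs_of_pos hR]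
      _ < 1 := (div_lt_one hR).mpr hz
  have huslit : ∀ θ, u θ ∈ Complex.slitPlane := fun θ => re_pos_of_near_one (hunear θ)
  have hune : ∀ θ, u θ ≠ 0 := fun θ => Complex.slitPlane_ne_zero (huslit θ)
  have key : ∀ θ : ℝ, (R:ℂ) * Complex.exp (2 * Real.pi * θ * Complex.I) * u θ = c θ - z := by
    intro θ
    rw [huu, hc]
    calc (R:ℂ) * Complex.exp (2 * Real.pi * θ * Complex.I) *
          (1 - z / R * Complex.exp (-(2 * Real.pi * θ * Complex.I)))
        = (R:ℂ) * Complex.exp (2 * Real.pi * θ * Complex.I) - ((R:ℂ)/R) * z *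
          (Complex.exp (2 * Real.pi * θ * Complex.I) *
            Complex.exp (-(2 * Real.pi * θ * Complex.I))) := by ring
      _ = (R:ℂ) * Complex.exp (2 * Real.pi * θ * Complex.I) - z := by
          rw [div_self hRC, hee θ]; ring
  set M : ℝ → ℂ := fun θ => (Real.log R : ℂ) + 2 * Real.pi * θ * Complex.I + Complex.log (u θ)
    with hM
  have hMexp : ∀ θ, Complex.exp (M θ) = c θ - z := by
    intro θ
    rw [hM]
    simp only [Complex.exp_add, Complex.exp_log (hune θ)]
    rw [← Complex.ofReal_exp, Real.exp_log hR]
    exact key θ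
  set d : ℝ → ℂ := fun θ => L (c θ) - M θ with hd
  have hccont : Continuous c := by fun_prop
  have hucont : Continuous u := by fun_prop
  have hdcont : Continuous d := by
    apply Continuous.sub
    · exact hL.comp_continuous hccont hcmem
    · apply Continuous.add (by fun_prop)
      exact hucont.clog huslit
  have hd1 : ∀ θ, Complex.exp (d θ) = 1 := by
    intro θ
    rw [hd]
    rw [Complex.exp_sub, hexp _ (hcmem θ), hMexp θ, div_self (hcne θ)]
  have hcon : d 0 = d 1 := by
    exact eq_of_exp_eq_one isPreconnected_univ hdcont.continuousOn
      (fun w _ => hd1 w) (mem_univ 0) (mem_univ 1)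
  have hc01 : c 1 = c 0 := by
    simp only [hc]
    norm_num [Complex.exp_two_pi_mul_I]
  have hu01 : u 1 = u 0 := by
    simp only [huu]
    norm_num
    have h1 : Complex.exp (-(2 * (Real.pi:ℂ) * Complex.I)) = 1 := by
      rw [Complex.exp_neg, Complex.exp_two_pi_mul_I, inv_one]
    rw [h1, mul_one]
  have hM01 : M 1 - M 0 = 2 * Real.pi * Complex.I := by
    simp only [hM, hu01]
    push_cast
    ring
  have : (0:ℂ) = 2 * Real.pi * Complex.I := by
    have e1 : d 1 - d 0 = -(M 1 - M 0) := by
      simp only [hd, hc01]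
      ring
    rw [hcon] at e1
    simp only [sub_self] at e1
    rw [hM01] at e1
    linear_combination -e1
  exact Complex.two_pi_I_ne_zero this.symm

lemma continuousOn_union_closed {α : Type*} [TopologicalSpace α] {A B : Set ℂ} {f g : ℂ → α}
    (hA : IsClosed A) (hB : IsClosed B)
    (hf : ContinuousOn f A) (hg : ContinuousOn g B)
    (hagree : ∀ x ∈ A ∩ B, f x = g x) :
    ContinuousOn (fun w => if w ∈ A then f w else g w) (A ∪ B) := by
  intro x hx
  by_cases hxA : x ∈ A
  · by_cases hxB : x ∈ B
    · apply ContinuousWithinAt.union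
      · exact ((hf x hxA).congr (fun y hy => if_pos hy) (if_pos hxA))
      · refine ((hg x hxB).congr (fun y hy => ?_) ?_)
        · by_cases hyA : y ∈ A
          · rw [if_pos hyA]; exact hagree y ⟨hyA, hy⟩
          · rw [if_neg hyA]
        · rw [if_pos hxA]; exact hagree x ⟨hxA, hxB⟩
    · have hmem : Bᶜ ∈ nhds x := hB.isOpen_compl.mem_nhds hxB
      rw [← continuousWithinAt_inter hmem]
      have hsub : (A ∪ B) ∩ Bᶜ ⊆ A := by
        rintro y ⟨hy1, hy2⟩
        rcases hy1 with h | h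
        · exact h
        · exact absurd h hy2
      exact (((hf x hxA).mono hsub).congr
        (fun y hy => if_pos (hsub hy)) (if_pos hxA))
  · have hxB : x ∈ B := hx.resolve_left hxA
    have hmem : Aᶜ ∈ nhds x := hA.isOpen_compl.mem_nhds hxA
    rw [← continuousWithinAt_inter hmem]
    have hsub : (A ∪ B) ∩ Aᶜ ⊆ B := by
      rintro y ⟨hy1, hy2⟩
      rcases hy1 with h | h
      · exact absurd h hy2
      · exact h
    exact (((hg x hxB).mono hsub).congr
      (fun y hy => if_neg hy.2) (if_neg hxA))

lemma glue_log {A B : Set ℂ} (hA : IsClosed A) (hB : IsClosed B)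
    (hconn : IsPreconnected (A ∩ B)) {h : ℂ → ℂ} (hh : ContinuousOn h (A ∪ B))
    {LA LB : ℂ → ℂ} (hLA : ContinuousOn LA A) (hLB : ContinuousOn LB B)
    (heA : ∀ w ∈ A, Complex.exp (LA w) = h w) (heB : ∀ w ∈ B, Complex.exp (LB w) = h w) :
    ∃ L, ContinuousOn L (A ∪ B) ∧ ∀ w ∈ A ∪ B, Complex.exp (L w) = h w := by
  rcases Set.eq_empty_or_nonempty (A ∩ B) with hemp | ⟨p, hp⟩
  · refine ⟨fun w => if w ∈ A then LA w else LB w,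
      continuousOn_union_closed hA hB hLA hLB (by rw [hemp]; simp), ?_⟩
    intro w hw
    by_cases hwA : w ∈ A
    · simp only [if_pos hwA]; exact heA w hwA
    · simp only [if_neg hwA]; exact heB w (hw.resolve_left hwA)
  · set c := LA p - LB p with hc
    have hexpc : Complex.exp c = 1 := by
      rw [hc, Complex.exp_sub, heA p hp.1, heB p hp.2, div_self]
      intro h0
      have := heA p hp.1
      rw [h0] at this
      exact Complex.exp_ne_zero _ this
    have hconst : ∀ w ∈ A ∩ B, LA w = LB w + c := by
      intro w hw
      have hd : ContinuousOn (fun w => LA w - LB w) (A ∩ B) :=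
        (hLA.mono inter_subset_left).sub (hLB.mono inter_subset_right)
      have h1 : ∀ w ∈ A ∩ B, Complex.exp ((fun w => LA w - LB w) w * 1) = 1 := by
        intro w hw
        rw [mul_one, Complex.exp_sub, heA w hw.1, heB w hw.2, div_self]
        intro h0
        have := heA w hw.1
        rw [h0] at this
        exact Complex.exp_ne_zero _ this
      have := eq_of_exp_eq_one hconn hd (by simpa using h1) hw hp
      rw [hc, ← this]
      ring
    refine ⟨fun w => if w ∈ A then LA w else LB w + c,
      continuousOn_union_closed hA hB hLA (hLB.add continuousOn_const) hconst, ?_⟩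
    intro w hw
    by_cases hwA : w ∈ A
    · simp only [if_pos hwA]; exact heA w hwA
    · simp only [if_neg hwA]
      rw [Complex.exp_add, hexpc, mul_one]
      exact heB w (hw.resolve_left hwA)

lemma log_on_closedBall {ρ : ℝ} (hρ : 0 ≤ ρ) {g : ℂ → ℂ}
    (hg : ContinuousOn g (closedBall (0:ℂ) ρ))
    (hne : ∀ w ∈ closedBall (0:ℂ) ρ, g w ≠ 0) :
    ∃ L, ContinuousOn L (closedBall (0:ℂ) ρ) ∧
      ∀ w ∈ closedBall (0:ℂ) ρ, Complex.exp (L w) = g w := by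
  set C := closedBall (0:ℂ) ρ with hC
  have hCc : IsCompact C := isCompact_closedBall _ _
  have hC0 : (0:ℂ) ∈ C := mem_closedBall_self hρ
  -- minimum of ‖g‖
  obtain ⟨x₀, hx₀, hmin⟩ := hCc.exists_isMinOn ⟨0, hC0⟩ (hg.norm)
  set m := ‖g x₀‖ with hm
  have hm0 : 0 < m := norm_pos_iff.mpr (hne x₀ hx₀)
  -- uniform continuity
  have huc := hCc.uniformContinuousOn_of_continuous hg
  rw [Metric.uniformContinuousOn_iff] at huc
  obtain ⟨δ, hδ0, hδ⟩ := huc m hm0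
  obtain ⟨n, hn⟩ := exists_nat_gt (max (ρ / δ) 0)
  have hn0 : 0 < (n:ℝ) := lt_of_le_of_lt (le_max_right _ _) hn
  have hρδ : ρ / δ < n := lt_of_le_of_lt (le_max_left _ _) hn
  have hscale : ∀ (t : ℝ), 0 ≤ t → t ≤ 1 → ∀ w ∈ C, (t:ℂ) * w ∈ C := by
    intro t ht0 ht1 w hw
    rw [hC, mem_closedBall, dist_zero_right] at *
    calc ‖(t:ℂ) * w‖ = t * ‖w‖ := by
          rw [norm_mul, Complex.norm_real, Real.norm_of_nonneg ht0]
      _ ≤ 1 * ρ := by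
          apply mul_le_mul ht1 hw (norm_nonneg _) zero_le_one
      _ = ρ := one_mul ρ
  have hfrac : ∀ i : ℕ, i ≤ n → 0 ≤ (i:ℝ)/n ∧ (i:ℝ)/n ≤ 1 := by
    intro i hi
    constructor
    · positivity
    · rw [div_le_one hn0]; exact_mod_cast hi
  have main : ∀ i : ℕ, i ≤ n → ∃ L, ContinuousOn L C ∧
      ∀ w ∈ C, Complex.exp (L w) = g (((i:ℝ)/n : ℝ) * w) := by
    intro i
    induction i with
    | zero =>
      intro _
      refine ⟨fun _ => Complex.log (g 0), continuousOn_const, ?_⟩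
      intro w hw
      have : (((0:ℕ):ℝ)/n : ℝ) * (w:ℂ) = 0 := by push_cast; simp
      rw [this]
      exact Complex.exp_log (hne 0 hC0)
    | succ i ih =>
      intro hi1
      obtain ⟨L, hLc, hLe⟩ := ih (le_of_lt (Nat.lt_of_succ_le hi1))
      have hi : i ≤ n := le_of_lt (Nat.lt_of_succ_le hi1)
      have hmem1 : ∀ w ∈ C, (((i+1:ℕ):ℝ)/n : ℝ) * (w:ℂ) ∈ C := by
        intro w hw
        have := hfrac (i+1) hi1
        exact_mod_cast hscale _ this.1 this.2 w hw
      have hmem0 : ∀ w ∈ C, (((i:ℕ):ℝ)/n : ℝ) * (w:ℂ) ∈ C := by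
        intro w hw
        have := hfrac i hi
        exact_mod_cast hscale _ this.1 this.2 w hw
      have hgc : ContinuousOn (fun w => g ((((i+1:ℕ):ℝ)/n : ℝ) * w)) C := by
        apply hg.comp (Continuous.continuousOn (by fun_prop))
        intro w hw; exact hmem1 w hw
      refine logOn_perturb hgc hLc ?_ |>.imp ?_
      · intro w hw
        rw [hLe w hw]
        have hd : dist ((((i+1:ℕ):ℝ)/n : ℝ) * (w:ℂ)) ((((i:ℕ):ℝ)/n : ℝ) * (w:ℂ)) < δ := by
          rw [dist_eq_norm, ← sub_mul]
          have : ((((i+1:ℕ):ℝ)/n : ℝ) : ℂ) - ((((i:ℕ):ℝ)/n : ℝ) : ℂ) = ((1/n : ℝ) : ℂ) := by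
            have hnne : (n:ℂ) ≠ 0 := by exact_mod_cast (show (0:ℝ) < n by assumption).ne'
            push_cast
            field_simp
            ring
          rw [this, norm_mul, Complex.norm_real,
            Real.norm_of_nonneg (show (0:ℝ) ≤ 1/n by positivity)]
          have hw' : ‖w‖ ≤ ρ := by rwa [hC, mem_closedBall, dist_zero_right] at hw
          calc (1/n : ℝ) * ‖w‖ ≤ (1/n) * ρ := by
                apply mul_le_mul_of_nonneg_left hw' (by positivity)
            _ < δ := by
                rw [div_mul_eq_mul_div, one_mul, div_lt_iff₀ hn0]
                calc ρ = (ρ/δ) * δ := by field_simp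
                  _ < n * δ := by exact mul_lt_mul_of_pos_right hρδ hδ0
                  _ = δ * n := mul_comm _ _

        have := hδ _ (hmem1 w hw) _ (hmem0 w hw) hd
        rw [dist_eq_norm] at this
        calc ‖g ((((i+1:ℕ):ℝ)/n : ℝ) * w) - g ((((i:ℕ):ℝ)/n : ℝ) * w)‖ < m := this
          _ ≤ ‖g ((((i:ℕ):ℝ)/n : ℝ) * w)‖ := hmin (hmem0 w hw)
      · intro L' hL'
        exact hL'
  obtain ⟨L, hLc, hLe⟩ := main n le_rfl
  refine ⟨L, hLc, ?_⟩
  intro w hw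
  have h1 : (((n:ℕ):ℝ)/n : ℝ) = 1 := div_self hn0.ne'
  have := hLe w hw
  rw [h1] at this
  simpa using this

lemma exists_log_of_unbounded_comp {A : Set ℂ} (hA : IsCompact A) {z : ℂ} (hz : z ∈ Aᶜ)
    (hub : ¬ Bornology.IsBounded (connectedComponentIn Aᶜ z)) :
    ∃ L, ContinuousOn L A ∧ ∀ w ∈ A, Complex.exp (L w) = w - z := by
  rcases Set.eq_empty_or_nonempty A with rfl | hAne
  · exact ⟨0, continuousOn_empty _, by simp⟩
  set U := connectedComponentIn Aᶜ z with hU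
  have hUopen : IsOpen U := hA.isClosed.isOpen_compl.connectedComponentIn
  have hUconn : IsConnected U := isConnected_connectedComponentIn_iff.mpr hz
  have hUpath : IsPathConnected U := (hUopen.isConnected_iff_isPathConnected).mp hUconn
  have hzU : z ∈ U := mem_connectedComponentIn hz
  obtain ⟨M, hM⟩ := hA.isBounded.subset_closedBall 0
  have hM0 : 0 ≤ M := by
    obtain ⟨a, ha⟩ := hAne
    have := hM ha
    rw [mem_closedBall, dist_zero_right] at this
    exact le_trans (norm_nonneg _) this
  obtain ⟨z', hz'U, hz'big⟩ : ∃ z' ∈ U, M < ‖z'‖ := by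
    by_contra hcon
    push_neg at hcon
    exact hub ((isBounded_closedBall (x := (0:ℂ)) (r := M)).subset
      (fun y hy => by rw [mem_closedBall, dist_zero_right]; exact hcon y hy))
  have hz'0 : z' ≠ 0 := by
    intro h; rw [h] at hz'big; simp at hz'big; linarith
  obtain ⟨γ, hγ⟩ := (hUpath.joinedIn z hzU z' hz'U)
  -- positive distance from the path to A
  obtain ⟨δ₀, hδ₀0, hδ₀⟩ : ∃ δ₀ > 0, ∀ t : unitInterval, ∀ w ∈ A, δ₀ ≤ dist (γ t) w := by
    have hcont : Continuous fun t : unitInterval => infDist (γ t) A :=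
      (continuous_infDist_pt A).comp γ.continuous
    obtain ⟨t₀, _, ht₀⟩ := isCompact_univ.exists_isMinOn ⟨0, mem_univ _⟩ hcont.continuousOn
    refine ⟨infDist (γ t₀) A, ?_, ?_⟩
    · exact (hA.isClosed.notMem_iff_infDist_pos hAne).mp (connectedComponentIn_subset _ _ (hγ t₀))
    · intro t w hw
      exact le_trans (ht₀ (mem_univ t)) (infDist_le_dist_of_mem hw)
  -- uniform continuity of the path
  have huc := CompactSpace.uniformContinuous_of_continuous γ.continuous
  rw [Metric.uniformContinuous_iff] at huc
  obtain ⟨δ, hδ0, hδ⟩ := huc δ₀ hδ₀0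
  obtain ⟨n, hn⟩ := exists_nat_gt (max (1 / δ) 0)
  have hn0 : 0 < (n:ℝ) := lt_of_le_of_lt (le_max_right _ _) hn
  have h1δ : 1 / δ < n := lt_of_le_of_lt (le_max_left _ _) hn
  have hmem : ∀ i : ℕ, ((n - i : ℕ) : ℝ)/n ∈ unitInterval := by
    intro i
    constructor
    · positivity
    · rw [div_le_one hn0]
      exact_mod_cast Nat.sub_le n i
  -- downward chain from z'
  have main : ∀ i : ℕ, i ≤ n → ∃ L, ContinuousOn L A ∧
      ∀ w ∈ A, Complex.exp (L w) = w - γ ⟨((n - i : ℕ) : ℝ)/n, hmem i⟩ := by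
    intro i
    induction i with
    | zero =>
      intro _
      have hend : γ ⟨((n - 0 : ℕ) : ℝ)/n, hmem 0⟩ = z' := by
        have : (⟨((n - 0 : ℕ) : ℝ)/n, hmem 0⟩ : unitInterval) = 1 := by
          apply Subtype.ext
          show ((n - 0 : ℕ) : ℝ)/n = 1
          simp [div_self hn0.ne']
        rw [this, γ.target]
      rw [hend]
      -- log of (w - z') via perturbation from the constant -z'
      have hbase : ∃ L, ContinuousOn L A ∧ ∀ w ∈ A, Complex.exp (L w) = w - z' := by
        apply logOn_perturb (g := fun w => w - z') (L := fun _ => Complex.log (-z'))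
          (Continuous.continuousOn (by fun_prop)) continuousOn_const
        intro w hw
        rw [Complex.exp_log (neg_ne_zero.mpr hz'0)]
        have hwM : ‖w‖ ≤ M := by
          have := hM hw; rwa [mem_closedBall, dist_zero_right] at this
        calc ‖w - z' - -z'‖ = ‖w‖ := by ring_nf
          _ ≤ M := hwM
          _ < ‖z'‖ := hz'big
          _ = ‖-z'‖ := (norm_neg z').symm
      exact hbase
    | succ i ih =>
      intro hi1
      obtain ⟨L, hLc, hLe⟩ := ih (by omega)
      apply logOn_perturb (g := fun w => w - γ ⟨((n - (i+1) : ℕ) : ℝ)/n, hmem (i+1)⟩)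
        (Continuous.continuousOn (by fun_prop)) hLc
      intro w hw
      rw [hLe w hw]
      set t1 : unitInterval := ⟨((n - (i+1) : ℕ) : ℝ)/n, hmem (i+1)⟩
      set t0 : unitInterval := ⟨((n - i : ℕ) : ℝ)/n, hmem i⟩
      have hdist : dist t1 t0 < δ := by
        rw [Subtype.dist_eq, Real.dist_eq]
        have h1 : ((n - (i+1) : ℕ) : ℝ) = (n:ℝ) - (i+1) := by
          have : (i+1) ≤ n := hi1
          push_cast [Nat.cast_sub this]; ring
        have h0 : ((n - i : ℕ) : ℝ) = (n:ℝ) - i := by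
          have : i ≤ n := by omega
          push_cast [Nat.cast_sub this]; ring
        show |((n - (i+1) : ℕ) : ℝ)/n - ((n - i : ℕ) : ℝ)/n| < δ
        rw [h1, h0, div_sub_div_same]
        have : ((n:ℝ) - (i+1) - ((n:ℝ) - i)) = -1 := by ring
        rw [this]
        rw [abs_div, abs_neg, abs_one, abs_of_pos hn0, div_lt_iff₀ hn0]
        calc (1:ℝ) = (1/δ) * δ := by field_simp
          _ < n * δ := mul_lt_mul_of_pos_right h1δ hδ0
          _ = δ * n := mul_comm _ _
      have hclose := hδ hdist
      have hd2 : ‖(w - γ t1) - (w - γ t0)‖ < δ₀ := by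
        have he : (w - γ t1) - (w - γ t0) = γ t0 - γ t1 := by ring
        rw [he, ← dist_eq_norm, dist_comm]
        exact hclose
      calc ‖(w - γ t1) - (w - γ t0)‖ < δ₀ := hd2
        _ ≤ dist (γ t0) w := hδ₀ t0 w hw
        _ = ‖w - γ t0‖ := by rw [dist_comm, dist_eq_norm]
  obtain ⟨L, hLc, hLe⟩ := main n le_rfl
  refine ⟨L, hLc, ?_⟩
  intro w hw
  have h0 : γ ⟨((n - n : ℕ) : ℝ)/n, hmem n⟩ = z := by
    have : (⟨((n - n : ℕ) : ℝ)/n, hmem n⟩ : unitInterval) = 0 := by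
      apply Subtype.ext
      show ((n - n : ℕ) : ℝ)/n = 0
      simp
    rw [this, γ.source]
  rw [← h0]
  exact hLe w hw

lemma frontier_connectedComponentIn_subset {S : Set ℂ} (hS : IsClosed S) (z : ℂ) :
    frontier (connectedComponentIn Sᶜ z) ⊆ S := by
  intro x hx
  by_contra hxS
  set U := connectedComponentIn Sᶜ z with hU
  have hUopen : IsOpen U := hS.isOpen_compl.connectedComponentIn
  have hxU : x ∉ U := by
    intro h
    exact (hUopen.frontier_eq ▸ hx).2 h
  have hzS : z ∈ Sᶜ := by
    by_contra hzS
    have : U = ∅ := connectedComponentIn_eq_empty hzS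
    rw [this] at hx
    simp at hx
  have hUne : U.Nonempty := ⟨z, mem_connectedComponentIn hzS⟩
  have hpre : IsPreconnected (insert x U) := by
    apply IsPreconnected.subset_closure (isPreconnected_connectedComponentIn)
      (subset_insert x U)
    intro y hy
    rcases hy with rfl | hy
    · exact hx.1
    · exact subset_closure hy
  have hsub : insert x U ⊆ Sᶜ := by
    intro y hy
    rcases hy with rfl | hy
    · exact hxS
    · exact connectedComponentIn_subset _ _ hy
  have := hpre.subset_connectedComponentIn (mem_insert_iff.mpr (Or.inr (mem_connectedComponentIn hzS))) hsub
  exact hxU (this (mem_insert x U))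

lemma not_log_of_bounded_comp {A : Set ℂ} (hA : IsCompact A) {z : ℂ} (hz : z ∈ Aᶜ)
    (hb : Bornology.IsBounded (connectedComponentIn Aᶜ z))
    {L : ℂ → ℂ} (hL : ContinuousOn L A)
    (he : ∀ w ∈ A, Complex.exp (L w) = w - z) : False := by
  set U := connectedComponentIn Aᶜ z with hU
  have hUopen : IsOpen U := hA.isClosed.isOpen_compl.connectedComponentIn
  have hzU : z ∈ U := mem_connectedComponentIn hz
  have hfr : frontier U ⊆ A := frontier_connectedComponentIn_subset hA.isClosed z
  -- Tietze extension of L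
  obtain ⟨G, hG⟩ := ContinuousMap.exists_restrict_eq (Y := ℂ) hA.isClosed
    ⟨A.restrict L, hL.restrict⟩
  have hGA : ∀ w ∈ A, G w = L w := by
    intro w hw
    have := DFunLike.congr_fun hG (⟨w, hw⟩ : A)
    exact this
  -- the global map Φ
  set Φ : ℂ → ℂ := fun w => if w ∈ closure U then z + Complex.exp (G w) else w with hΦ
  have hΦcont : Continuous Φ := by
    rw [← continuousOn_univ]
    have hcover : (univ : Set ℂ) = closure U ∪ Uᶜ := by
      apply eq_of_subset_of_subset
      · intro w _
        by_cases h : w ∈ U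
        · exact Or.inl (subset_closure h)
        · exact Or.inr h
      · exact subset_univ _
    rw [hcover]
    apply continuousOn_union_closed isClosed_closure (hUopen.isClosed_compl)
      ((continuous_const.add G.continuous.cexp).continuousOn) continuousOn_id
    intro x hx
    have hxfr : x ∈ frontier U := by
      rw [hUopen.frontier_eq]
      exact ⟨hx.1, hx.2⟩
    have hxA : x ∈ A := hfr hxfr
    show z + Complex.exp (G x) = x
    rw [hGA x hxA, he x hxA]
    ring
  have hΦne : ∀ w, Φ w ≠ z := by
    intro w h
    rw [hΦ] at h
    by_cases hw : w ∈ closure U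
    · simp only [if_pos hw] at h
      have : Complex.exp (G w) = 0 := by linear_combination h
      exact Complex.exp_ne_zero _ this
    · simp only [if_neg hw] at h
      exact hw (subset_closure (h ▸ hzU))
  have hΦid : ∀ w, w ∉ closure U → Φ w = w := by
    intro w hw
    rw [hΦ]
    simp only [if_neg hw]
  -- radius
  obtain ⟨R, hRU, hzR⟩ : ∃ R, closure U ⊆ ball 0 R ∧ ‖z‖ < R := by
    obtain ⟨R, hR⟩ := hb.closure.subset_ball_lt 0 0
    refine ⟨R, hR.2, ?_⟩
    have := hR.2 (subset_closure hzU)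
    rwa [mem_ball, dist_zero_right] at this
  have hR0 : 0 < R := lt_of_le_of_lt (norm_nonneg z) hzR
  -- log on the closed ball
  obtain ⟨Λ, hΛc, hΛe⟩ := log_on_closedBall (le_of_lt hR0)
    (g := fun w => Φ w - z) ((hΦcont.sub continuous_const).continuousOn)
    (fun w _ => sub_ne_zero.mpr (hΦne w))
  apply no_log_on_sphere hzR Λ (hΛc.mono sphere_subset_closedBall)
  intro w hw
  have hwnc : w ∉ closure U := by
    intro h
    have := hRU h
    rw [mem_ball, dist_zero_right] at this
    rw [mem_sphere_iff_norm, sub_zero] at hw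
    rw [hw] at this
    exact lt_irrefl _ this
  rw [hΛe w (sphere_subset_closedBall hw), hΦid w hwnc]

/-- Janiszewski-type theorem for compact sets with preconnected intersection. -/
lemma janiszewski {A B : Set ℂ} (hA : IsCompact A) (hB : IsCompact B)
    (hAB : IsPreconnected (A ∩ B)) {z : ℂ} (hzA : z ∉ A) (hzB : z ∉ B)
    (hubA : ¬ Bornology.IsBounded (connectedComponentIn Aᶜ z))
    (hubB : ¬ Bornology.IsBounded (connectedComponentIn Bᶜ z)) :
    ¬ Bornology.IsBounded (connectedComponentIn (A ∪ B)ᶜ z) := by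
  intro hb
  obtain ⟨LA, hLAc, hLAe⟩ := exists_log_of_unbounded_comp hA hzA hubA
  obtain ⟨LB, hLBc, hLBe⟩ := exists_log_of_unbounded_comp hB hzB hubB
  obtain ⟨L, hLc, hLe⟩ := glue_log hA.isClosed hB.isClosed hAB
    (h := fun w => w - z) (Continuous.continuousOn (by fun_prop)) hLAc hLBc hLAe hLBe
  exact not_log_of_bounded_comp (hA.union hB)
    (by simp [mem_compl_iff, mem_union]; exact ⟨hzA, hzB⟩) hb hLc hLe

lemma connectedComponentIn_eq_of_clopen {S U : Set ℂ} {z : ℂ}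
    (hUopen : IsOpen U) (hUpre : IsPreconnected U) (hz : z ∈ U)
    (hsub : U ⊆ Sᶜ) (hfr : frontier U ⊆ S) :
    connectedComponentIn Sᶜ z = U := by
  apply eq_of_subset_of_subset
  · intro x hx
    set C := connectedComponentIn Sᶜ z with hC
    have hCpre : IsPreconnected C := isPreconnected_connectedComponentIn
    have hCsub : C ⊆ Sᶜ := connectedComponentIn_subset _ _
    have hcover : C ⊆ U ∪ (closure U)ᶜ := by
      intro y hy
      by_cases h : y ∈ U
      · exact Or.inl h
      · right
        intro hcl
        have : y ∈ frontier U := ⟨hcl, by rwa [hUopen.interior_eq]⟩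
        exact hCsub hy (hfr this)
    by_contra hxU
    have hne := hCpre U (closure U)ᶜ hUopen (isClosed_closure.isOpen_compl) hcover
      ⟨z, mem_connectedComponentIn (hsub hz), hz⟩
      ⟨x, hx, fun hcl => hxU ((hcover hx).resolve_right (fun h => h hcl))⟩
    obtain ⟨y, _, hy1, hy2⟩ := hne
    exact hy2 (subset_closure hy1)
  · exact hUpre.subset_connectedComponentIn hz hsub

lemma jordanBoundary_closedBall {r : ℝ} (hr : 0 < r) :
    JordanBoundary (closedBall (0:ℂ) r) := by
  have hrc : (r:ℂ) ≠ 0 := by exact_mod_cast hr.ne'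
  refine ⟨1, fun _ => sphere (0:ℂ) r, fun i => ?_, ?_, ?_⟩
  · refine ⟨fun w => (r:ℂ) * w, (continuous_const.mul continuous_id).continuousOn,
      fun a _ b _ hab => mul_left_cancel₀ hrc hab, ?_⟩
    apply eq_of_subset_of_subset
    · intro x hx
      rw [mem_sphere_iff_norm, sub_zero] at hx
      have hx0 : x ≠ 0 := by
        intro h; rw [h] at hx; simp at hx; exact hr.ne hx
      refine ⟨x / r, ?_, ?_⟩
      · rw [mem_sphere_iff_norm, sub_zero, norm_div, hx, Complex.norm_real,
          Real.norm_of_nonneg hr.le, div_self hr.ne']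
      · field_simp
    · rintro x ⟨w, hw, rfl⟩
      rw [mem_sphere_iff_norm, sub_zero] at *
      rw [norm_mul, Complex.norm_real, Real.norm_of_nonneg hr.le, hw, mul_one]
  · intro i j hij
    exact absurd (Subsingleton.elim i j) hij
  · rw [frontier_closedBall _ hr.ne']
    exact (iUnion_const _).symm


/-- The union of two disjoint closed Arakeljan sets in `ℂ` is again an
Arakeljan set in `ℂ`. -/
theorem isArakeljanC_union
    (E F : Set ℂ) (hE : IsClosed E) (hF : IsClosed F) (hdisj : Disjoint E F)
    (hEA : IsArakeljanC E) (hFA : IsArakeljanC F) :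
    IsArakeljanC (E ∪ F) := by
  constructor
  · -- every connected component of the complement is unbounded
    intro z hz hbdd
    have hzE : z ∉ E := fun h => hz (Or.inl h)
    have hzF : z ∉ F := fun h => hz (Or.inr h)
    set U := connectedComponentIn (E ∪ F)ᶜ z with hUdef
    have hUopen : IsOpen U := (hE.union hF).isOpen_compl.connectedComponentIn
    have hUpre : IsPreconnected U := isPreconnected_connectedComponentIn
    have hzU : z ∈ U := mem_connectedComponentIn hz
    obtain ⟨R, hR0, hRsub⟩ := hbdd.closure.subset_ball_lt 0 0
    set A := E ∩ closedBall (0:ℂ) R with hAdef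
    set B := F ∩ closedBall (0:ℂ) R with hBdef
    have hAcomp : IsCompact A := (isCompact_closedBall _ _).inter_left hE
    have hBcomp : IsCompact B := (isCompact_closedBall _ _).inter_left hF
    have hABemp : A ∩ B = ∅ := by
      apply eq_empty_of_subset_empty
      intro x ⟨hxA, hxB⟩
      exact absurd rfl (hdisj.ne_of_mem hxA.1 hxB.1)
    have hABpre : IsPreconnected (A ∩ B) := by rw [hABemp]; exact isPreconnected_empty
    have hzA : z ∉ A := fun h => hzE h.1
    have hzB : z ∉ B := fun h => hzF h.1
    have hfrEF : frontier U ⊆ E ∪ F := frontier_connectedComponentIn_subset (hE.union hF) z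
    have hfr : frontier U ⊆ A ∪ B := by
      intro y hy
      have hy2 : y ∈ closedBall (0:ℂ) R :=
        ball_subset_closedBall (hRsub (frontier_subset_closure hy))
      rcases hfrEF hy with h | h
      · exact Or.inl ⟨h, hy2⟩
      · exact Or.inr ⟨h, hy2⟩
    have hUsub : U ⊆ (A ∪ B)ᶜ := by
      intro y hy hyAB
      apply connectedComponentIn_subset _ _ hy
      rcases hyAB with h | h
      · exact Or.inl h.1
      · exact Or.inr h.1
    have hUeq : connectedComponentIn (A ∪ B)ᶜ z = U :=
      connectedComponentIn_eq_of_clopen hUopen hUpre hzU hUsub hfr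
    have hubA : ¬ Bornology.IsBounded (connectedComponentIn Aᶜ z) := by
      intro h
      exact hEA.1 z hzE (h.subset (connectedComponentIn_mono _
        (compl_subset_compl.mpr inter_subset_left)))
    have hubB : ¬ Bornology.IsBounded (connectedComponentIn Bᶜ z) := by
      intro h
      exact hFA.1 z hzF (h.subset (connectedComponentIn_mono _
        (compl_subset_compl.mpr inter_subset_left)))
    exact janiszewski hAcomp hBcomp hABpre hzA hzB hubA hubB (hUeq ▸ hbdd)
  · -- bounded components relative to a compact K
    intro K hKcomp hKconn hKjb
    obtain ⟨r, hr0, hKr⟩ := hKcomp.isBounded.subset_ball_lt 0 0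
    set D := closedBall (0:ℂ) r with hDdef
    have hDcomp : IsCompact D := isCompact_closedBall _ _
    have hDconn : IsConnected D :=
      ⟨⟨0, mem_closedBall_self hr0.le⟩, (convex_closedBall _ _).isPreconnected⟩
    have hDjb : JordanBoundary D := jordanBoundary_closedBall hr0
    have hBE := hEA.2 D hDcomp hDconn hDjb
    have hBF := hFA.2 D hDcomp hDconn hDjb
    apply Bornology.IsBounded.subset
      (((isBounded_closedBall (x := (0:ℂ)) (r := r)).union hBE).union hBF)
    intro z hzmem
    simp only [mem_iUnion, mem_setOf_eq] at hzmem
    obtain ⟨g, ⟨⟨z₀, hz₀, rfl⟩, hgbdd⟩, hzg⟩ := hzmem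
    have hzc : z ∈ ((E ∪ F) ∪ K)ᶜ := connectedComponentIn_subset _ _ hzg
    have hzE : z ∉ E := fun h => hzc (Or.inl (Or.inl h))
    have hzF : z ∉ F := fun h => hzc (Or.inl (Or.inr h))
    have hgz : connectedComponentIn ((E ∪ F) ∪ K)ᶜ z
        = connectedComponentIn ((E ∪ F) ∪ K)ᶜ z₀ := (connectedComponentIn_eq hzg).symm
    by_cases hzD : z ∈ D
    · exact Or.inl (Or.inl hzD)
    · have hzED : z ∈ ((E ∪ F) ∪ D)ᶜ := by
        intro h
        rcases h with h | h
        · exact hzc (Or.inl h)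
        · exact hzD h
      set W := connectedComponentIn ((E ∪ F) ∪ D)ᶜ z with hWdef
      have hWopen : IsOpen W :=
        ((hE.union hF).union isClosed_closedBall).isOpen_compl.connectedComponentIn
      have hWpre : IsPreconnected W := isPreconnected_connectedComponentIn
      have hzW : z ∈ W := mem_connectedComponentIn hzED
      have hWsub : W ⊆ connectedComponentIn ((E ∪ F) ∪ K)ᶜ z := by
        apply connectedComponentIn_mono
        apply compl_subset_compl.mpr
        apply union_subset_union_right
        exact hKr.trans ball_subset_closedBall
      have hWbdd : Bornology.IsBounded W := by
        apply Bornology.IsBounded.subset _ hWsub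
        rw [hgz]
        exact hgbdd
      have key : Bornology.IsBounded (connectedComponentIn (E ∪ D)ᶜ z)
          ∨ Bornology.IsBounded (connectedComponentIn (F ∪ D)ᶜ z) := by
        by_contra hcon
        push_neg at hcon
        obtain ⟨hcon1, hcon2⟩ := hcon
        obtain ⟨R, hrR, hRsub⟩ := hWbdd.closure.subset_ball_lt r 0
        set A := (E ∩ closedBall (0:ℂ) R) ∪ D with hAdef
        set B := (F ∩ closedBall (0:ℂ) R) ∪ D with hBdef
        have hAcomp : IsCompact A := ((isCompact_closedBall _ _).inter_left hE).union hDcomp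
        have hBcomp : IsCompact B := ((isCompact_closedBall _ _).inter_left hF).union hDcomp
        have hABeq : A ∩ B = D := by
          apply eq_of_subset_of_subset
          · rintro x ⟨hxA, hxB⟩
            rcases hxA with h1 | h1
            · rcases hxB with h2 | h2
              · exact absurd rfl (hdisj.ne_of_mem h1.1 h2.1)
              · exact h2
            · exact h1
          · intro x hx
            exact ⟨Or.inr hx, Or.inr hx⟩
        have hABpre : IsPreconnected (A ∩ B) := by
          rw [hABeq]
          exact (convex_closedBall _ _).isPreconnected
        have hzA : z ∉ A := by
          rintro (h | h)
          · exact hzE h.1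
          · exact hzD h
        have hzB : z ∉ B := by
          rintro (h | h)
          · exact hzF h.1
          · exact hzD h
        have hubA : ¬ Bornology.IsBounded (connectedComponentIn Aᶜ z) := by
          intro h
          apply hcon1
          apply h.subset
          apply connectedComponentIn_mono
          apply compl_subset_compl.mpr
          exact union_subset_union_left _ inter_subset_left
        have hubB : ¬ Bornology.IsBounded (connectedComponentIn Bᶜ z) := by
          intro h
          apply hcon2
          apply h.subset
          apply connectedComponentIn_mono
          apply compl_subset_compl.mpr
          exact union_subset_union_left _ inter_subset_left
        have hfrW : frontier W ⊆ (E ∪ F) ∪ D :=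
          frontier_connectedComponentIn_subset ((hE.union hF).union isClosed_closedBall) z
        have hfr : frontier W ⊆ A ∪ B := by
          intro y hy
          have hy2 : y ∈ closedBall (0:ℂ) R :=
            ball_subset_closedBall (hRsub (frontier_subset_closure hy))
          rcases hfrW hy with (h | h) | h
          · exact Or.inl (Or.inl ⟨h, hy2⟩)
          · exact Or.inr (Or.inl ⟨h, hy2⟩)
          · exact Or.inl (Or.inr h)
        have hWsub2 : W ⊆ (A ∪ B)ᶜ := by
          intro y hy hyAB
          apply connectedComponentIn_subset _ _ hy
          rcases hyAB with (h | h) | (h | h)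
          · exact Or.inl (Or.inl h.1)
          · exact Or.inr h
          · exact Or.inl (Or.inr h.1)
          · exact Or.inr h
        have hWeq : connectedComponentIn (A ∪ B)ᶜ z = W :=
          connectedComponentIn_eq_of_clopen hWopen hWpre hzW hWsub2 hfr
        exact janiszewski hAcomp hBcomp hABpre hzA hzB hubA hubB (hWeq ▸ hWbdd)
      rcases key with h | h
      · apply Or.inl
        apply Or.inr
        simp only [mem_iUnion, mem_setOf_eq]
        refine ⟨connectedComponentIn (E ∪ D)ᶜ z, ⟨⟨z, ?_, rfl⟩, h⟩, ?_⟩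
        · intro hmem
          rcases hmem with hh | hh
          · exact hzE hh
          · exact hzD hh
        · apply mem_connectedComponentIn
          intro hmem
          rcases hmem with hh | hh
          · exact hzE hh
          · exact hzD hh
      · apply Or.inr
        simp only [mem_iUnion, mem_setOf_eq]
        refine ⟨connectedComponentIn (F ∪ D)ᶜ z, ⟨⟨z, ?_, rfl⟩, h⟩, ?_⟩
        · intro hmem
          rcases hmem with hh | hh
          · exact hzF hh
          · exact hzD hh
        · apply mem_connectedComponentIn
          intro hmem
          rcases hmem with hh | hh
          · exact hzF hh
          · exact hzD hh
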